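/- arXiv:2002.09215 — 2 statements merged into one kernel-verified Lean document; each statement's English description precedes it below -/
import Mathlib

section
/- The time-dependent Bachelier put pricing function attains the terminal payoff: for every x ∈ ℝ, p(x,u) → max(Δ−x, 0) as u → 1 from the left. -/
open MeasureTheory Real Filter

/-- The standard normal density. -/
noncomputable def stdNormalPDF (x : ℝ) : ℝ :=
  (Real.sqrt (2 * Real.pi))⁻¹ * Real.exp (-(x ^ 2) / 2)

/-- The standard normal cumulative distribution function. -/
noncomputable def stdNormalCDF (x : ℝ) : ℝ :=
  ∫ t in Set.Iic x, stdNormalPDF t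

lemma stdNormalPDF_eq : stdNormalPDF = ProbabilityTheory.gaussianPDFReal 0 1 := by
  funext x
  simp [stdNormalPDF, ProbabilityTheory.gaussianPDFReal, neg_div]

lemma integrable_stdNormalPDF : Integrable stdNormalPDF := by
  rw [stdNormalPDF_eq]; exact ProbabilityTheory.integrable_gaussianPDFReal 0 1

lemma integral_stdNormalPDF : ∫ x, stdNormalPDF x = 1 := by
  rw [stdNormalPDF_eq]; exact ProbabilityTheory.integral_gaussianPDFReal_eq_one 0 one_ne_zero

lemma stdNormalPDF_nonneg (x : ℝ) : 0 ≤ stdNormalPDF x :=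
  mul_nonneg (inv_nonneg.2 (Real.sqrt_nonneg _)) (Real.exp_pos _).le

lemma stdNormalPDF_le (x : ℝ) : stdNormalPDF x ≤ (Real.sqrt (2 * Real.pi))⁻¹ := by
  rw [stdNormalPDF]
  have h1 : Real.exp (-(x ^ 2) / 2) ≤ 1 := by
    rw [Real.exp_le_one_iff]
    nlinarith [sq_nonneg x]
  calc (Real.sqrt (2 * Real.pi))⁻¹ * Real.exp (-(x ^ 2) / 2)
      ≤ (Real.sqrt (2 * Real.pi))⁻¹ * 1 :=
        mul_le_mul_of_nonneg_left h1 (inv_nonneg.2 (Real.sqrt_nonneg _))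
    _ = (Real.sqrt (2 * Real.pi))⁻¹ := mul_one _

lemma tendsto_stdNormalCDF_atTop : Tendsto stdNormalCDF atTop (nhds 1) := by
  have h := (MeasureTheory.aecover_Iic (μ := (volume : Measure ℝ)) (l := atTop)
      (b := id) tendsto_id).integral_tendsto_of_countably_generated integrable_stdNormalPDF
  rw [integral_stdNormalPDF] at h
  exact h

lemma tendsto_stdNormalCDF_atBot : Tendsto stdNormalCDF atBot (nhds 0) := by
  have h := (MeasureTheory.aecover_Ioi (μ := (volume : Measure ℝ)) (l := atBot)
      (a := id) tendsto_id).integral_tendsto_of_countably_generated integrable_stdNormalPDF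
  rw [integral_stdNormalPDF] at h
  have key : ∀ x : ℝ, stdNormalCDF x = 1 - ∫ t in Set.Ioi x, stdNormalPDF t := by
    intro x
    have hadd : (∫ t in Set.Iic x, stdNormalPDF t) + ∫ t in Set.Ioi x, stdNormalPDF t
        = ∫ t, stdNormalPDF t := by
      rw [← MeasureTheory.setIntegral_union (Set.Iic_disjoint_Ioi le_rfl) measurableSet_Ioi
        integrable_stdNormalPDF.integrableOn integrable_stdNormalPDF.integrableOn,
        Set.Iic_union_Ioi, MeasureTheory.setIntegral_univ]
    rw [integral_stdNormalPDF] at hadd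
    rw [stdNormalCDF]
    linarith
  have : Tendsto (fun x : ℝ => 1 - ∫ t in Set.Ioi x, stdNormalPDF t) atBot (nhds (1 - 1)) :=
    tendsto_const_nhds.sub h
  rw [sub_self] at this
  exact this.congr fun x => (key x).symm

/-- The time-dependent Bachelier put pricing function attains the terminal payoff:
for every `x ∈ ℝ`, `p(x,u) → max(Δ−x, 0)` as `u → 1` from the left. -/
theorem bachelier_put_terminal_payoff
    (Δ : ℝ) (v : ℝ → ℝ)
    (hv_cont : ContinuousOn v (Set.Icc 0 1))
    (hv_pos : ∀ t ∈ Set.Icc (0:ℝ) 1, 0 < v t)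
    (w : ℝ → ℝ) (hw : ∀ u, w u = ∫ t in (0:ℝ)..u, v t)
    (p : ℝ → ℝ → ℝ)
    (hp : ∀ x : ℝ, ∀ u ∈ Set.Ico (0:ℝ) 1,
      p x u = (Δ - x) * stdNormalCDF ((Δ - x) / Real.sqrt (w 1 - w u))
        + Real.sqrt (w 1 - w u) * stdNormalPDF ((Δ - x) / Real.sqrt (w 1 - w u))) :
    ∀ x : ℝ, Filter.Tendsto (fun u => p x u) (nhdsWithin 1 (Set.Iio 1))
      (nhds (max (Δ - x) 0)) := by
  intro x
  set c := Δ - x with hc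
  -- eventually u ∈ Ico 0 1
  have hmem : ∀ᶠ u in nhdsWithin (1:ℝ) (Set.Iio 1), u ∈ Set.Ico (0:ℝ) 1 := by
    filter_upwards [Ioo_mem_nhdsLT_of_mem
      (show (1:ℝ) ∈ Set.Ioc 0 1 by norm_num)] with u hu
    exact ⟨hu.1.le, hu.2⟩
  -- bound on v
  obtain ⟨tM, htM, hM⟩ := isCompact_Icc.exists_isMaxOn
    (Set.nonempty_Icc.2 zero_le_one) hv_cont
  set M := v tM with hMdef
  have hMpos : 0 < M := hv_pos tM htM
  -- integrability
  have hint : ∀ a b : ℝ, a ∈ Set.Icc (0:ℝ) 1 → b ∈ Set.Icc (0:ℝ) 1 →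
      IntervalIntegrable v volume a b := fun a b ha hb =>
    (hv_cont.mono (Set.uIcc_subset_Icc ha hb)).intervalIntegrable
  -- key identity
  have hdiff : ∀ u ∈ Set.Ico (0:ℝ) 1, w 1 - w u = ∫ t in u..(1:ℝ), v t := by
    intro u hu
    have hu' : u ∈ Set.Icc (0:ℝ) 1 := ⟨hu.1, hu.2.le⟩
    have h1 : (1:ℝ) ∈ Set.Icc (0:ℝ) 1 := ⟨zero_le_one, le_rfl⟩
    have h0 : (0:ℝ) ∈ Set.Icc (0:ℝ) 1 := ⟨le_rfl, zero_le_one⟩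
    have hadd := intervalIntegral.integral_add_adjacent_intervals
      (hint 0 u h0 hu') (hint u 1 hu' h1)
    rw [hw, hw]
    linarith
  -- positivity
  have hpos : ∀ u ∈ Set.Ico (0:ℝ) 1, 0 < w 1 - w u := by
    intro u hu
    rw [hdiff u hu]
    exact intervalIntegral.intervalIntegral_pos_of_pos_on
      (hint u 1 ⟨hu.1, hu.2.le⟩ ⟨zero_le_one, le_rfl⟩)
      (fun t ht => hv_pos t ⟨le_trans hu.1 ht.1.le, ht.2.le⟩) hu.2
  -- upper bound
  have hle : ∀ u ∈ Set.Ico (0:ℝ) 1, w 1 - w u ≤ M * (1 - u) := by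
    intro u hu
    rw [hdiff u hu]
    have := intervalIntegral.integral_mono_on (μ := volume) (f := v)
      (g := fun _ => M) hu.2.le
      (hint u 1 ⟨hu.1, hu.2.le⟩ ⟨zero_le_one, le_rfl⟩)
      (intervalIntegrable_const)
      (fun t ht => hM ⟨le_trans hu.1 ht.1, ht.2⟩)
    rw [intervalIntegral.integral_const] at this
    calc (∫ t in u..(1:ℝ), v t) ≤ (1 - u) • M := this
      _ = M * (1 - u) := by rw [smul_eq_mul]; ring
  -- w 1 - w u → 0⁺
  have hw0 : Tendsto (fun u => w 1 - w u) (nhdsWithin (1:ℝ) (Set.Iio 1))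
      (nhdsWithin 0 (Set.Ioi 0)) := by
    apply tendsto_nhdsWithin_of_tendsto_nhds_of_eventually_within
    · have hub : Tendsto (fun u : ℝ => M * (1 - u)) (nhdsWithin (1:ℝ) (Set.Iio 1)) (nhds 0) := by
        have : Tendsto (fun u : ℝ => M * (1 - u)) (nhds (1:ℝ)) (nhds (M * (1 - 1))) :=
          (tendsto_const_nhds.mul (tendsto_const_nhds.sub tendsto_id))
        simpa using this.mono_left nhdsWithin_le_nhds
      apply squeeze_zero'
        (hmem.mono fun u hu => (hpos u hu).le)
        (hmem.mono fun u hu => hle u hu) hub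
    · exact hmem.mono fun u hu => hpos u hu
  -- s u := sqrt (w 1 - w u) → 0⁺
  have hs : Tendsto (fun u => Real.sqrt (w 1 - w u)) (nhdsWithin (1:ℝ) (Set.Iio 1))
      (nhdsWithin 0 (Set.Ioi 0)) := by
    apply tendsto_nhdsWithin_of_tendsto_nhds_of_eventually_within
    · have : Tendsto Real.sqrt (nhds 0) (nhds (Real.sqrt 0)) := Real.continuous_sqrt.tendsto 0
      rw [Real.sqrt_zero] at this
      exact this.comp (hw0.mono_right nhdsWithin_le_nhds)
    · exact hmem.mono fun u hu => Real.sqrt_pos.2 (hpos u hu)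
  have hs0 : Tendsto (fun u => Real.sqrt (w 1 - w u)) (nhdsWithin (1:ℝ) (Set.Iio 1)) (nhds 0) :=
    hs.mono_right nhdsWithin_le_nhds
  -- second term tends to 0
  have hT2 : Tendsto (fun u => Real.sqrt (w 1 - w u)
      * stdNormalPDF (c / Real.sqrt (w 1 - w u)))
      (nhdsWithin (1:ℝ) (Set.Iio 1)) (nhds 0) := by
    apply squeeze_zero'
      (Eventually.of_forall fun u =>
        mul_nonneg (Real.sqrt_nonneg _) (stdNormalPDF_nonneg _))
      (Eventually.of_forall fun u => ?_)
      (g := fun u => (Real.sqrt (2 * Real.pi))⁻¹ * Real.sqrt (w 1 - w u))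
    · have : Tendsto (fun u => (Real.sqrt (2 * Real.pi))⁻¹ * Real.sqrt (w 1 - w u))
          (nhdsWithin (1:ℝ) (Set.Iio 1)) (nhds ((Real.sqrt (2 * Real.pi))⁻¹ * 0)) :=
        tendsto_const_nhds.mul hs0
      simpa using this
    · calc Real.sqrt (w 1 - w u) * stdNormalPDF (c / Real.sqrt (w 1 - w u))
          ≤ Real.sqrt (w 1 - w u) * (Real.sqrt (2 * Real.pi))⁻¹ :=
            mul_le_mul_of_nonneg_left (stdNormalPDF_le _) (Real.sqrt_nonneg _)
        _ = (Real.sqrt (2 * Real.pi))⁻¹ * Real.sqrt (w 1 - w u) := mul_comm _ _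
  -- first term tends to max c 0
  have hT1 : Tendsto (fun u => c * stdNormalCDF (c / Real.sqrt (w 1 - w u)))
      (nhdsWithin (1:ℝ) (Set.Iio 1)) (nhds (max c 0)) := by
    rcases lt_trichotomy c 0 with hneg | hzero | hposc
    · -- c < 0 : argument → atBot, CDF → 0, product → 0
      have harg : Tendsto (fun u => c / Real.sqrt (w 1 - w u))
          (nhdsWithin (1:ℝ) (Set.Iio 1)) atBot := by
        have hinv : Tendsto (fun u => (Real.sqrt (w 1 - w u))⁻¹)
            (nhdsWithin (1:ℝ) (Set.Iio 1)) atTop := hs.inv_tendsto_nhdsGT_zero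
        have := (tendsto_const_mul_atBot_of_neg hneg
          (f := fun u => (Real.sqrt (w 1 - w u))⁻¹)).2 hinv
        simpa [div_eq_mul_inv] using this
      have hcdf : Tendsto (fun u => stdNormalCDF (c / Real.sqrt (w 1 - w u)))
          (nhdsWithin (1:ℝ) (Set.Iio 1)) (nhds 0) :=
        tendsto_stdNormalCDF_atBot.comp harg
      have : Tendsto (fun u => c * stdNormalCDF (c / Real.sqrt (w 1 - w u)))
          (nhdsWithin (1:ℝ) (Set.Iio 1)) (nhds (c * 0)) := tendsto_const_nhds.mul hcdf
      rw [mul_zero] at this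
      rwa [max_eq_right hneg.le]
    · simp only [hzero, zero_mul]
      rw [max_eq_right le_rfl]
      exact tendsto_const_nhds
    · -- c > 0 : argument → atTop, CDF → 1, product → c
      have harg : Tendsto (fun u => c / Real.sqrt (w 1 - w u))
          (nhdsWithin (1:ℝ) (Set.Iio 1)) atTop := by
        have hinv : Tendsto (fun u => (Real.sqrt (w 1 - w u))⁻¹)
            (nhdsWithin (1:ℝ) (Set.Iio 1)) atTop := hs.inv_tendsto_nhdsGT_zero
        have := hinv.const_mul_atTop hposc
        simpa [div_eq_mul_inv] using this
      have hcdf : Tendsto (fun u => stdNormalCDF (c / Real.sqrt (w 1 - w u)))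
          (nhdsWithin (1:ℝ) (Set.Iio 1)) (nhds 1) :=
        tendsto_stdNormalCDF_atTop.comp harg
      have : Tendsto (fun u => c * stdNormalCDF (c / Real.sqrt (w 1 - w u)))
          (nhdsWithin (1:ℝ) (Set.Iio 1)) (nhds (c * 1)) := tendsto_const_nhds.mul hcdf
      rw [mul_one] at this
      rwa [max_eq_left hposc.le]
  -- combine
  have hsum := hT1.add hT2
  rw [add_zero] at hsum
  apply hsum.congr'
  filter_upwards [hmem] with u hu
  rw [hp x u hu, hc]
end

section
/- Let ξ be a centered Gaussian random variable with variance v₀ > 0 and let z ∈ ℝ. Then v₀ · ∫₀¹ E[ (v₀(1−u))^{−1/2} · φ((z − √u·ξ)/√(v₀(1−u))) · √u·ξ ] du = (z·√v₀/2) · φ(z/√v₀). -/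
open MeasureTheory Real Filter

open ProbabilityTheory

open scoped NNReal ENNReal

lemma aux_odd_gauss (b : ℝ) (hb : 0 < b) : ∫ x : ℝ, x * rexp (-b * x ^ 2) = 0 := by
  have h := integral_neg_eq_self (fun x : ℝ => x * rexp (-b * x ^ 2)) volume
  simp only [neg_sq, neg_mul] at h
  rw [integral_neg] at h
  simp only [neg_mul] at h ⊢
  linarith

lemma aux_first_moment (s m : ℝ) (hs : 0 < s) :
    ∫ x : ℝ, x * rexp (-(x - m) ^ 2 / (2 * s)) = m * Real.sqrt (2 * π * s) := by
  have hb : 0 < (2 * s)⁻¹ := by positivity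
  have h := integral_add_right_eq_self (μ := volume)
    (fun x : ℝ => x * rexp (-(x - m) ^ 2 / (2 * s))) m
  simp only [add_sub_cancel_right] at h
  rw [← h]
  have : ∀ x : ℝ, (x + m) * rexp (-x ^ 2 / (2 * s))
      = x * rexp (-(2 * s)⁻¹ * x ^ 2) + m * rexp (-(2 * s)⁻¹ * x ^ 2) := by
    intro x
    rw [add_mul]
    congr 2 <;> ring_nf
  simp_rw [this]
  rw [integral_add (integrable_mul_exp_neg_mul_sq hb)
    ((integrable_exp_neg_mul_sq hb).const_mul m), aux_odd_gauss _ hb, integral_const_mul,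
    integral_gaussian, zero_add]
  congr 1
  rw [div_eq_mul_inv, inv_inv]
  ring

lemma aux_integral_gaussianReal_pdf {v : ℝ≥0} (hv : v ≠ 0) (g : ℝ → ℝ) :
    ∫ x, g x ∂(gaussianReal 0 v) = ∫ x, gaussianPDFReal 0 v x * g x := by
  rw [gaussianReal_of_var_ne_zero _ hv,
    show gaussianPDF 0 v = fun x => ((gaussianPDFReal 0 v x).toNNReal : ℝ≥0∞) from rfl,
    integral_withDensity_eq_integral_smul
      ((measurable_gaussianPDFReal 0 v).real_toNNReal) g]
  congr 1
  funext x
  rw [NNReal.smul_def, smul_eq_mul, Real.coe_toNNReal _ (gaussianPDFReal_nonneg _ _ _)]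

lemma aux_gauss_inner (v a σ z : ℝ) (hv : 0 < v) (hσ : 0 < σ) (hcond : σ ^ 2 + a ^ 2 * v = v) :
    ∫ x : ℝ, gaussianPDFReal 0 v.toNNReal x * (σ⁻¹ * stdNormalPDF ((z - a * x) / σ) * (a * x))
      = a ^ 2 * z / Real.sqrt v * stdNormalPDF (z / Real.sqrt v) := by
  have hπ : (0:ℝ) < π := Real.pi_pos
  have hvc : ((v.toNNReal : ℝ)) = v := Real.coe_toNNReal _ hv.le
  have key : ∀ x : ℝ,
      gaussianPDFReal 0 v.toNNReal x * (σ⁻¹ * stdNormalPDF ((z - a * x) / σ) * (a * x))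
        = (a * (√(2 * π * v))⁻¹ * σ⁻¹ * (√(2 * π))⁻¹ * rexp (-z ^ 2 / (2 * v)))
          * (x * rexp (-(x - a * z) ^ 2 / (2 * σ ^ 2))) := by
    intro x
    rw [gaussianPDFReal, stdNormalPDF, hvc]
    have hexp : rexp (-(x - 0) ^ 2 / (2 * v)) * rexp (-(((z - a * x) / σ) ^ 2) / 2)
        = rexp (-z ^ 2 / (2 * v)) * rexp (-(x - a * z) ^ 2 / (2 * σ ^ 2)) := by
      rw [← Real.exp_add, ← Real.exp_add]
      congr 1
      field_simp
      linear_combination (z ^ 2 - x ^ 2) * hcond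
    calc (√(2 * π * v))⁻¹ * rexp (-(x - 0) ^ 2 / (2 * v)) *
          (σ⁻¹ * ((√(2 * π))⁻¹ * rexp (-(((z - a * x) / σ) ^ 2) / 2)) * (a * x))
        = ((√(2 * π * v))⁻¹ * σ⁻¹ * (√(2 * π))⁻¹ * a * x) *
          (rexp (-(x - 0) ^ 2 / (2 * v)) * rexp (-(((z - a * x) / σ) ^ 2) / 2)) := by ring
      _ = _ := by rw [hexp]; ring
  simp_rw [key]
  rw [integral_const_mul, aux_first_moment (σ ^ 2) (a * z) (by positivity)]
  have h1 : √(2 * π * σ ^ 2) = σ * √(2 * π) := by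
    rw [mul_comm (2*π) (σ^2), Real.sqrt_mul (sq_nonneg σ), Real.sqrt_sq hσ.le]
  have h2 : √(2 * π * v) = √(2 * π) * √v := Real.sqrt_mul (by positivity) v
  have h4 : rexp (-z ^ 2 / (2 * v)) = rexp (-(z / √v) ^ 2 / 2) := by
    congr 1
    rw [div_pow, Real.sq_sqrt hv.le]
    ring
  rw [stdNormalPDF, h1, h2, h4]
  have hs2 : (0:ℝ) < √(2*π) := by positivity
  have hsv : (0:ℝ) < √v := Real.sqrt_pos.mpr hv
  field_simp

lemma aux_continuous_stdNormalPDF : Continuous stdNormalPDF := by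
  unfold stdNormalPDF
  fun_prop

/-- For `ξ ~ N(0, v₀)` with `v₀ > 0` and `z ∈ ℝ`:
`v₀ ∫₀¹ E[(v₀(1−u))^{−1/2} φ((z−√u ξ)/√(v₀(1−u))) √u ξ] du = (z √v₀/2) φ(z/√v₀)`. -/
theorem gaussian_drift_integral
    {Ω : Type*} [MeasurableSpace Ω] (P : Measure Ω) [IsProbabilityMeasure P]
    (ξ : Ω → ℝ) (hξ : Measurable ξ)
    (v₀ : ℝ) (hv₀ : 0 < v₀)
    (hlaw : Measure.map ξ P = gaussianReal 0 (Real.toNNReal v₀))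
    (z : ℝ) :
    v₀ * (∫ u in (0:ℝ)..1, ∫ ω,
        (Real.sqrt (v₀ * (1 - u)))⁻¹
          * stdNormalPDF ((z - Real.sqrt u * ξ ω) / Real.sqrt (v₀ * (1 - u)))
          * (Real.sqrt u * ξ ω) ∂P)
      = z * Real.sqrt v₀ / 2 * stdNormalPDF (z / Real.sqrt v₀) := by
  have hvNN : (Real.toNNReal v₀) ≠ 0 := (Real.toNNReal_pos.mpr hv₀).ne'
  have hinner : ∀ u ∈ Set.Ioo (0:ℝ) 1,
      (∫ ω, (Real.sqrt (v₀ * (1 - u)))⁻¹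
          * stdNormalPDF ((z - Real.sqrt u * ξ ω) / Real.sqrt (v₀ * (1 - u)))
          * (Real.sqrt u * ξ ω) ∂P)
        = u * (z / Real.sqrt v₀ * stdNormalPDF (z / Real.sqrt v₀)) := by
    intro u hu
    set σ : ℝ := Real.sqrt (v₀ * (1 - u)) with hσdef
    have hσ : 0 < σ := Real.sqrt_pos.mpr (by nlinarith [hu.1, hu.2])
    have ha2 : (Real.sqrt u) ^ 2 = u := Real.sq_sqrt hu.1.le
    have hσ2 : σ ^ 2 = v₀ * (1 - u) := Real.sq_sqrt (by nlinarith [hu.1, hu.2])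
    have hg : Continuous fun x : ℝ =>
        σ⁻¹ * stdNormalPDF ((z - Real.sqrt u * x) / σ) * (Real.sqrt u * x) := by
      have := aux_continuous_stdNormalPDF
      fun_prop
    have hmap : (∫ ω, σ⁻¹ * stdNormalPDF ((z - Real.sqrt u * ξ ω) / σ) * (Real.sqrt u * ξ ω) ∂P)
        = ∫ x, σ⁻¹ * stdNormalPDF ((z - Real.sqrt u * x) / σ) * (Real.sqrt u * x)
            ∂(Measure.map ξ P) :=
      (integral_map hξ.aemeasurable (hg.aestronglyMeasurable)).symm
    rw [hmap, hlaw, aux_integral_gaussianReal_pdf hvNN,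
      aux_gauss_inner v₀ (Real.sqrt u) σ z hv₀ hσ (by rw [hσ2, ha2]; ring), ha2]
    ring
  have hcongr : (∫ u in (0:ℝ)..1, ∫ ω,
        (Real.sqrt (v₀ * (1 - u)))⁻¹
          * stdNormalPDF ((z - Real.sqrt u * ξ ω) / Real.sqrt (v₀ * (1 - u)))
          * (Real.sqrt u * ξ ω) ∂P)
      = ∫ u in (0:ℝ)..1, u * (z / Real.sqrt v₀ * stdNormalPDF (z / Real.sqrt v₀)) := by
    apply intervalIntegral.integral_congr_ae
    have h1 : ∀ᵐ u : ℝ, u ≠ (1:ℝ) := by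
      rw [ae_iff]
      simp only [ne_eq, not_not, Set.setOf_eq_eq_singleton]
      exact Real.volume_singleton
    filter_upwards [h1] with u hu1 hu
    rw [Set.uIoc_of_le (by norm_num : (0:ℝ) ≤ 1)] at hu
    exact hinner u ⟨hu.1, lt_of_le_of_ne hu.2 hu1⟩
  rw [hcongr, intervalIntegral.integral_mul_const, integral_id]
  have hsv : (0:ℝ) < Real.sqrt v₀ := Real.sqrt_pos.mpr hv₀
  have hms : Real.sqrt v₀ * Real.sqrt v₀ = v₀ := Real.mul_self_sqrt hv₀.le
  field_simp
  linear_combination (-1) * z * stdNormalPDF (z / Real.sqrt v₀) * hms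
end
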